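/- arXiv:2601.15185 — 2 statements merged into one kernel-verified Lean document; each statement's English description precedes it below -/
import Mathlib

section
/- Suppose X is an infinite set and G is a highly transitive group of permutations of X such that every non-identity element of G has infinite support. Then the group Zariski topology on G is irreducible. -/
/-- The group Zariski topology on a group `G`: the topology generated by the sets
`{x | g₀ * x ^ k₀ * g₁ * ⋯ * x ^ k_{l-1} * g_l ≠ 1}`. A word is encoded by its
leading constant `g₀` together with the list of pairs `(kᵢ, g_{i+1})`. -/
def zariskiTopology (G : Type*) [Group G] : TopologicalSpace G :=
  TopologicalSpace.generateFrom
    {S : Set G | ∃ (g₀ : G) (w : List (ℤ × G)),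
      S = {x : G | g₀ * (w.map fun p => x ^ p.1 * p.2).prod ≠ 1}}

namespace ZarAux

variable {X : Type*}

/-- Evaluation of the variable part of a word at `x`. -/
def pev (x : Equiv.Perm X) (w : List (ℤ × Equiv.Perm X)) : Equiv.Perm X :=
  (w.map fun q => x ^ q.1 * q.2).prod

lemma pev_cons (x : Equiv.Perm X) (a : ℤ × Equiv.Perm X) (w : List (ℤ × Equiv.Perm X)) :
    pev x (a :: w) = x ^ a.1 * a.2 * pev x w := by
  simp [pev, mul_assoc]

lemma agree_pow (x y : Equiv.Perm X) (n : ℕ) (p : X)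
    (h : ∀ j < n, y ((x ^ j) p) = x ((x ^ j) p)) : (y ^ n) p = (x ^ n) p := by
  induction n generalizing p with
  | zero => simp
  | succ n ih =>
    have h0 : y p = x p := by simpa using h 0 (Nat.succ_pos n)
    have hx : ∀ j < n, y ((x ^ j) (x p)) = x ((x ^ j) (x p)) := by
      intro j hj
      have := h (j + 1) (by omega)
      rwa [pow_succ, Equiv.Perm.mul_apply] at this
    calc (y ^ (n + 1)) p = (y ^ n) (y p) := by rw [pow_succ, Equiv.Perm.mul_apply]
      _ = (y ^ n) (x p) := by rw [h0]
      _ = (x ^ n) (x p) := ih (x p) hx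
      _ = (x ^ (n + 1)) p := by rw [pow_succ, Equiv.Perm.mul_apply]

lemma agree_pow_inv (x y : Equiv.Perm X) (n : ℕ) (p : X)
    (h : ∀ j < n, y ((x⁻¹ ^ (j + 1)) p) = x ((x⁻¹ ^ (j + 1)) p)) :
    (y⁻¹ ^ n) p = (x⁻¹ ^ n) p := by
  induction n generalizing p with
  | zero => simp
  | succ n ih =>
    have h0 : y⁻¹ p = x⁻¹ p := by
      have h1 : y (x⁻¹ p) = x (x⁻¹ p) := by simpa using h 0 (Nat.succ_pos n)
      have h2 : y (x⁻¹ p) = p := by rw [h1]; exact x.apply_symm_apply p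
      calc y⁻¹ p = y⁻¹ (y (x⁻¹ p)) := by rw [h2]
        _ = x⁻¹ p := y.symm_apply_apply _
    have hx : ∀ j < n, y ((x⁻¹ ^ (j + 1)) (x⁻¹ p)) = x ((x⁻¹ ^ (j + 1)) (x⁻¹ p)) := by
      intro j hj
      have := h (j + 1) (by omega)
      rwa [pow_succ, Equiv.Perm.mul_apply] at this
    calc (y⁻¹ ^ (n + 1)) p = (y⁻¹ ^ n) (y⁻¹ p) := by rw [pow_succ, Equiv.Perm.mul_apply]
      _ = (y⁻¹ ^ n) (x⁻¹ p) := by rw [h0]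
      _ = (x⁻¹ ^ n) (x⁻¹ p) := ih (x⁻¹ p) hx
      _ = (x⁻¹ ^ (n + 1)) p := by rw [pow_succ, Equiv.Perm.mul_apply]

/-- Exponent list describing the points needed to control `x ^ k`. -/
def expList (k : ℤ) : List ℤ :=
  if 0 ≤ k then (List.range k.toNat).map fun j => (j : ℤ)
  else (List.range (-k).toNat).map fun j => (-(j : ℤ) - 1)

def seg (x : Equiv.Perm X) (k : ℤ) (p : X) : List X :=
  (expList k).map fun j => (x ^ j) p

lemma agree_zpow (x y : Equiv.Perm X) (k : ℤ) (p : X)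
    (h : ∀ q ∈ seg x k p, y q = x q) : (y ^ k) p = (x ^ k) p := by
  rcases le_or_gt 0 k with hk | hk
  · obtain ⟨n, rfl⟩ : ∃ n : ℕ, k = (n : ℤ) := ⟨k.toNat, (Int.toNat_of_nonneg hk).symm⟩
    rw [zpow_natCast, zpow_natCast]
    refine agree_pow x y n p fun j hj => ?_
    refine h _ ?_
    simp only [seg, expList, if_pos hk, List.mem_map, List.mem_range]
    exact ⟨(j : ℤ), ⟨j, by simpa using hj, rfl⟩, by rw [zpow_natCast]⟩
  · have hk' : ¬ 0 ≤ k := not_le.2 hk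
    obtain ⟨n, rfl⟩ : ∃ n : ℕ, k = -(n : ℤ) :=
      ⟨(-k).toNat, by rw [Int.toNat_of_nonneg (by omega)]; ring⟩
    rw [zpow_neg, zpow_neg, zpow_natCast, zpow_natCast, ← inv_pow, ← inv_pow]
    refine agree_pow_inv x y n p fun j hj => ?_
    have he : x⁻¹ ^ (j + 1) = x ^ (-(j : ℤ) - 1) := by
      rw [show -(j:ℤ) - 1 = -((j + 1 : ℕ) : ℤ) by push_cast; ring, zpow_neg, zpow_natCast,
        inv_pow]
    rw [he]
    refine h _ ?_
    simp only [seg, expList, if_neg hk', List.mem_map, List.mem_range]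
    exact ⟨-(j:ℤ) - 1, ⟨j, by simpa using hj, rfl⟩, rfl⟩

/-- Points where `y` must agree with `x` so that the word evaluates the same at `p`. -/
def needSet (x : Equiv.Perm X) : List (ℤ × Equiv.Perm X) → X → List X
  | [], _ => []
  | a :: w, p => needSet x w p ++ seg x a.1 (a.2 ((pev x w) p))

lemma needSet_spec (x y : Equiv.Perm X) (w : List (ℤ × Equiv.Perm X)) (p : X)
    (h : ∀ q ∈ needSet x w p, y q = x q) : (pev y w) p = (pev x w) p := by
  induction w with
  | nil => rfl
  | cons a w ih =>
    have h1 : ∀ q ∈ needSet x w p, y q = x q := fun q hq =>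
      h q (by simp [needSet, hq])
    have h2 : ∀ q ∈ seg x a.1 (a.2 ((pev x w) p)), y q = x q := fun q hq =>
      h q (by simp [needSet, hq])
    rw [pev_cons, pev_cons, Equiv.Perm.mul_apply, Equiv.Perm.mul_apply,
      Equiv.Perm.mul_apply, Equiv.Perm.mul_apply, ih h1,
      agree_zpow x y a.1 _ h2]

lemma seg_cover (x : Equiv.Perm X) (k : ℤ) :
    ∃ L : List (Equiv.Perm X), ∀ p : X, ∀ q ∈ seg x k p, ∃ π ∈ L, q = π p := by
  refine ⟨(expList k).map fun j => x ^ j, ?_⟩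
  intro p q hq
  simp only [seg, List.mem_map] at hq
  obtain ⟨j, hj, rfl⟩ := hq
  exact ⟨x ^ j, by simp only [List.mem_map]; exact ⟨j, hj, rfl⟩, rfl⟩

lemma needSet_cover (x : Equiv.Perm X) (w : List (ℤ × Equiv.Perm X)) :
    ∃ L : List (Equiv.Perm X), ∀ p : X, ∀ q ∈ needSet x w p, ∃ π ∈ L, q = π p := by
  induction w with
  | nil => exact ⟨[], by simp [needSet]⟩
  | cons a w ih =>
    obtain ⟨L, hL⟩ := ih
    obtain ⟨Ls, hLs⟩ := seg_cover x a.1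
    refine ⟨L ++ Ls.map fun π => π * (a.2 * pev x w), ?_⟩
    intro p q hq
    rcases List.mem_append.1 hq with hq | hq
    · obtain ⟨π, hπ, rfl⟩ := hL p q hq
      exact ⟨π, List.mem_append.2 (Or.inl hπ), rfl⟩
    · obtain ⟨π, hπ, rfl⟩ := hLs (a.2 ((pev x w) p)) q hq
      refine ⟨π * (a.2 * pev x w), List.mem_append.2 (Or.inr ?_), by
        simp [Equiv.Perm.mul_apply]⟩
      simp only [List.mem_map]
      exact ⟨π, hπ, rfl⟩

/-- The one-word lemma: given a witness `x` whose word value has infinite support and a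
finite avoid-list `F`, there is a finite agreement list `A` away from `F` such that any
permutation agreeing with `x` on `A` also has nontrivial word value. -/
lemma perword (g₀ x : Equiv.Perm X) (w : List (ℤ × Equiv.Perm X))
    (hx : {q : X | (g₀ * pev x w) q ≠ q}.Infinite) (F : List X) :
    ∃ A : List X, (∀ q ∈ A, q ∉ F ∧ x q ∉ F) ∧
      ∀ y : Equiv.Perm X, (∀ q ∈ A, y q = x q) → g₀ * pev y w ≠ 1 := by
  classical
  obtain ⟨L, hL⟩ := needSet_cover x w
  set L' : List (Equiv.Perm X) := L ++ L.map (fun π => x * π) with hL'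
  set B : Finset X := F.toFinset.biUnion
    (fun t => (L'.map (fun π => π⁻¹ t)).toFinset) with hB
  obtain ⟨p, hp, hpB⟩ := hx.exists_notMem_finset B
  refine ⟨needSet x w p, ?_, ?_⟩
  · intro q hq
    obtain ⟨π, hπ, rfl⟩ := hL p q hq
    constructor
    · intro hqF
      refine hpB ?_
      rw [hB, Finset.mem_biUnion]
      refine ⟨π p, List.mem_toFinset.2 hqF, ?_⟩
      rw [List.mem_toFinset]
      simp only [List.mem_map]
      exact ⟨π, List.mem_append.2 (Or.inl hπ), π.symm_apply_apply p⟩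
    · intro hxF
      refine hpB ?_
      rw [hB, Finset.mem_biUnion]
      refine ⟨x (π p), List.mem_toFinset.2 hxF, ?_⟩
      rw [List.mem_toFinset]
      simp only [List.mem_map]
      refine ⟨x * π, List.mem_append.2 (Or.inr ?_), ?_⟩
      · simp only [List.mem_map]; exact ⟨π, hπ, rfl⟩
      · rw [show x (π p) = (x * π) p from rfl]; exact (x * π).symm_apply_apply p
  · intro y hy h1
    have heq := needSet_spec x y w p hy
    have hp' : (g₀ * pev x w) p ≠ p := hp
    apply hp'
    calc (g₀ * pev x w) p = g₀ ((pev x w) p) := rfl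
      _ = g₀ ((pev y w) p) := by rw [heq]
      _ = (g₀ * pev y w) p := rfl
      _ = (1 : Equiv.Perm X) p := by rw [h1]
      _ = p := rfl

lemma pev_mem (G : Subgroup (Equiv.Perm X)) (x : Equiv.Perm X) (hx : x ∈ G)
    (w : List (ℤ × Equiv.Perm X)) (hw : ∀ a ∈ w, a.2 ∈ G) : pev x w ∈ G := by
  refine Subgroup.list_prod_mem _ ?_
  intro g hg
  simp only [List.mem_map] at hg
  obtain ⟨a, ha, rfl⟩ := hg
  exact mul_mem (zpow_mem hx _) (hw a ha)

/-- Combining lemma: simultaneously handle a finite list of words with witnesses. -/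
lemma combine (G : Subgroup (Equiv.Perm X))
    (hsupp : ∀ g ∈ G, g ≠ 1 → {x : X | g x ≠ x}.Infinite) :
    ∀ ws : List (Equiv.Perm X × List (ℤ × Equiv.Perm X)),
      (∀ pr ∈ ws, pr.1 ∈ G ∧ ∀ a ∈ pr.2, a.2 ∈ G) →
      (∀ pr ∈ ws, ∃ x ∈ G, pr.1 * pev x pr.2 ≠ 1) →
      ∀ F : List X, ∃ (s : List X) (f : X → X),
        (∀ q ∈ s, q ∉ F ∧ f q ∉ F) ∧ Set.InjOn f {a | a ∈ s} ∧
        ∀ y : Equiv.Perm X, (∀ q ∈ s, y q = f q) →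
          ∀ pr ∈ ws, pr.1 * pev y pr.2 ≠ 1 := by
  classical
  intro ws
  induction ws with
  | nil =>
    intro _ _ F
    exact ⟨[], id, by simp, by simp [Set.InjOn], by simp⟩
  | cons pr ws ih =>
    intro hmem hwit F
    obtain ⟨s, f, hsF, hinj, hword⟩ :=
      ih (fun p hp => hmem p (List.mem_cons_of_mem _ hp))
        (fun p hp => hwit p (List.mem_cons_of_mem _ hp)) F
    obtain ⟨x, hxG, hxne⟩ := hwit pr (List.mem_cons_self)
    have hvG : pr.1 * pev x pr.2 ∈ G :=
      mul_mem (hmem pr (List.mem_cons_self)).1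
        (pev_mem G x hxG _ (hmem pr (List.mem_cons_self)).2)
    have hinf := hsupp _ hvG hxne
    obtain ⟨A, hA, hAw⟩ := perword pr.1 x pr.2 hinf (F ++ s ++ s.map f)
    have hAnots : ∀ q ∈ A, q ∉ s := by
      intro q hq hqs
      exact (hA q hq).1 (by simp [hqs])
    refine ⟨s ++ A, fun q => if q ∈ A then x q else f q, ?_, ?_, ?_⟩
    · intro q hq
      rcases List.mem_append.1 hq with hq | hq
      · have hqA : q ∉ A := fun hqA => hAnots q hqA hq
        simpa [hqA] using hsF q hq
      · have h1 := hA q hq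
        constructor
        · intro hqF; exact h1.1 (by simp [hqF])
        · show (if q ∈ A then x q else f q) ∉ F
          rw [if_pos hq]; intro hqF; exact h1.2 (by simp [hqF])
    · intro a ha b hb hab
      replace hab : (if a ∈ A then x a else f a) = (if b ∈ A then x b else f b) := hab
      simp only [Set.mem_setOf_eq, List.mem_append] at ha hb
      have hximg : ∀ c ∈ A, ∀ d ∈ s, x c ≠ f d := by
        intro c hc d hd he
        refine (hA c hc).2 ?_
        simp only [List.mem_append, List.mem_map]
        exact Or.inr ⟨d, hd, he.symm⟩
      rcases ha with ha | ha <;> rcases hb with hb | hb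
      · have haA : a ∉ A := fun h => hAnots a h ha
        have hbA : b ∉ A := fun h => hAnots b h hb
        rw [if_neg haA, if_neg hbA] at hab
        exact hinj ha hb hab
      · have haA : a ∉ A := fun h => hAnots a h ha
        rw [if_neg haA, if_pos hb] at hab
        exact absurd hab.symm (hximg b hb a ha)
      · have hbA : b ∉ A := fun h => hAnots b h hb
        rw [if_pos ha, if_neg hbA] at hab
        exact absurd hab (hximg a ha b hb)
      · rw [if_pos ha, if_pos hb] at hab
        exact x.injective hab
    · intro y hy pr' hpr'
      rcases List.mem_cons.1 hpr' with rfl | hpr'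
      · refine hAw y fun q hq => ?_
        have h2 : y q = if q ∈ A then x q else f q := hy q (List.mem_append.2 (Or.inr hq))
        rwa [if_pos hq] at h2
      · refine hword y (fun q hq => ?_) pr' hpr'
        have h2 : y q = if q ∈ A then x q else f q := hy q (List.mem_append.2 (Or.inl hq))
        rwa [if_neg (fun h => hAnots q h hq)] at h2

lemma coe_word (G : Subgroup (Equiv.Perm X)) (g₀ : G) (w : List (ℤ × G)) (x : G) :
    ((g₀ * (w.map fun q => x ^ q.1 * q.2).prod : G) : Equiv.Perm X)
      = (g₀ : Equiv.Perm X) *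
        pev (x : Equiv.Perm X) (w.map fun a => (a.1, (a.2 : Equiv.Perm X))) := by
  simp only [Subgroup.coe_mul, SubmonoidClass.coe_list_prod, pev, List.map_map]
  congr 2

/-- The key lemma, phrased inside the subgroup. -/
lemma key (G : Subgroup (Equiv.Perm X))
    (htrans : ∀ (f : X → X) (s : Finset X), Set.InjOn f ↑s →
      ∃ g ∈ G, ∀ x ∈ s, g x = f x)
    (hsupp : ∀ g ∈ G, g ≠ 1 → {x : X | g x ≠ x}.Infinite)
    (ws : List (↥G × List (ℤ × ↥G)))
    (hwit : ∀ pr ∈ ws, ∃ x : ↥G, pr.1 * (pr.2.map fun q => x ^ q.1 * q.2).prod ≠ 1) :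
    ∃ y : ↥G, ∀ pr ∈ ws, pr.1 * (pr.2.map fun q => y ^ q.1 * q.2).prod ≠ 1 := by
  classical
  set ws' : List (Equiv.Perm X × List (ℤ × Equiv.Perm X)) :=
    ws.map (fun pr => ((pr.1 : Equiv.Perm X),
      pr.2.map fun a => (a.1, (a.2 : Equiv.Perm X)))) with hws'
  have hmem : ∀ pr ∈ ws', pr.1 ∈ G ∧ ∀ a ∈ pr.2, a.2 ∈ G := by
    intro pr hpr
    simp only [hws', List.mem_map] at hpr
    obtain ⟨pr₀, _, rfl⟩ := hpr
    refine ⟨SetLike.coe_mem _, ?_⟩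
    intro a ha
    simp only [List.mem_map] at ha
    obtain ⟨a₀, _, rfl⟩ := ha
    exact SetLike.coe_mem _
  have hwit' : ∀ pr ∈ ws', ∃ x ∈ G, pr.1 * pev x pr.2 ≠ 1 := by
    intro pr hpr
    simp only [hws', List.mem_map] at hpr
    obtain ⟨pr₀, h₀, rfl⟩ := hpr
    obtain ⟨x, hx⟩ := hwit pr₀ h₀
    refine ⟨(x : Equiv.Perm X), SetLike.coe_mem _, ?_⟩
    intro h1
    apply hx
    have := coe_word G pr₀.1 pr₀.2 x
    rw [h1] at this
    exact_mod_cast this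
  obtain ⟨s, f, _, hinj, hfin⟩ := combine G hsupp ws' hmem hwit' []
  have hinj' : Set.InjOn f ↑s.toFinset := by
    rw [List.coe_toFinset]; exact hinj
  obtain ⟨g, hgG, hgf⟩ := htrans f s.toFinset hinj'
  refine ⟨⟨g, hgG⟩, ?_⟩
  intro pr hpr
  have hmm : ((pr.1 : Equiv.Perm X), pr.2.map fun a => (a.1, (a.2 : Equiv.Perm X))) ∈ ws' := by
    simp only [hws', List.mem_map]
    exact ⟨pr, hpr, rfl⟩
  have h' := hfin g (fun q hq => hgf q (List.mem_toFinset.2 hq)) _ hmm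
  intro h1
  apply h'
  have := coe_word G pr.1 pr.2 ⟨g, hgG⟩
  rw [h1] at this
  simp only [OneMemClass.coe_one] at this
  exact this.symm

end ZarAux

/-- If X is an infinite set and G a highly transitive group of permutations of X all
of whose non-identity elements have infinite support, then the group Zariski topology
on G is irreducible: any two non-empty Zariski-open sets intersect. -/
theorem zariski_irreducible_of_highly_transitive {X : Type*} [Infinite X]
    (G : Subgroup (Equiv.Perm X))
    (htrans : ∀ (f : X → X) (s : Finset X), Set.InjOn f ↑s →
      ∃ g ∈ G, ∀ x ∈ s, g x = f x)
    (hsupp : ∀ g ∈ G, g ≠ 1 → {x : X | g x ≠ x}.Infinite) :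
    ∀ U V : Set G, (zariskiTopology G).IsOpen U → (zariskiTopology G).IsOpen V →
      U.Nonempty → V.Nonempty → (U ∩ V).Nonempty := by
  classical
  intro U V hU hV hUne hVne
  obtain ⟨u, hu⟩ := hUne
  obtain ⟨v, hv⟩ := hVne
  letI : TopologicalSpace ↥G := zariskiTopology ↥G
  have hbasis := TopologicalSpace.isTopologicalBasis_of_subbasis
    (s := {S : Set ↥G | ∃ (g₀ : ↥G) (w : List (ℤ × ↥G)),
      S = {x : ↥G | g₀ * (w.map fun p => x ^ p.1 * p.2).prod ≠ 1}}) rfl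
  obtain ⟨bU, hbUmem, huBU, hbUsub⟩ := hbasis.exists_subset_of_mem_open hu hU
  obtain ⟨bV, hbVmem, hvBV, hbVsub⟩ := hbasis.exists_subset_of_mem_open hv hV
  obtain ⟨fU, ⟨hfinU, hsubU⟩, rfl⟩ := hbUmem
  obtain ⟨fV, ⟨hfinV, hsubV⟩, rfl⟩ := hbVmem
  have hfin : (fU ∪ fV).Finite := hfinU.union hfinV
  -- choose a word for each subbasic set in the union
  have hchoice : ∀ t ∈ fU ∪ fV, ∃ pr : ↥G × List (ℤ × ↥G),
      t = {x : ↥G | pr.1 * (pr.2.map fun q => x ^ q.1 * q.2).prod ≠ 1} := by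
    intro t ht
    rcases ht with ht | ht
    · obtain ⟨g₀, w, h⟩ := hsubU ht; exact ⟨(g₀, w), h⟩
    · obtain ⟨g₀, w, h⟩ := hsubV ht; exact ⟨(g₀, w), h⟩
  choose! prF hprF using hchoice
  set ws : List (↥G × List (ℤ × ↥G)) := hfin.toFinset.toList.map prF with hws
  have hwit : ∀ pr ∈ ws, ∃ x : ↥G,
      pr.1 * (pr.2.map fun q => x ^ q.1 * q.2).prod ≠ 1 := by
    intro pr hpr
    simp only [hws, List.mem_map] at hpr
    obtain ⟨t, htl, rfl⟩ := hpr
    have htc : t ∈ fU ∪ fV := by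
      have := Finset.mem_toList.1 htl
      exact (Set.Finite.mem_toFinset hfin).1 this
    have hz : ∃ z : ↥G, z ∈ t := by
      rcases htc with ht | ht
      · exact ⟨u, huBU t ht⟩
      · exact ⟨v, hvBV t ht⟩
    obtain ⟨z, hz⟩ := hz
    rw [hprF t htc] at hz
    exact ⟨z, hz⟩
  obtain ⟨y, hy⟩ := ZarAux.key G htrans hsupp ws hwit
  have hyt : ∀ t ∈ fU ∪ fV, y ∈ t := by
    intro t htc
    have hmem : prF t ∈ ws := by
      simp only [hws, List.mem_map]
      exact ⟨t, Finset.mem_toList.2 ((Set.Finite.mem_toFinset hfin).2 htc), rfl⟩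
    have := hy (prF t) hmem
    rw [hprF t htc]
    exact this
  refine ⟨y, hbUsub ?_, hbVsub ?_⟩
  · exact fun t ht => hyt t (Or.inl ht)
  · exact fun t ht => hyt t (Or.inr ht)
end

section
/- Suppose X is a Hausdorff topological space with no isolated points and G is a group acting faithfully and highly transitively on X by homeomorphisms. Then the group Zariski topology on G is irreducible; in particular it is neither Hausdorff nor a group topology (when G is nontrivial). -/
namespace ZariskiAux

variable {G : Type*} [Group G]

/-- Evaluation of a word. -/
def evalW (w : G × List (ℤ × G)) (x : G) : G :=
  w.1 * (w.2.map fun p => x ^ p.1 * p.2).prod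

/-- Coefficients recording the "computation chain" of a word evaluated at `x`. -/
noncomputable def coeffs (x : G) : List (ℤ × G) → Finset G
  | [] => ∅
  | (k, h) :: rest =>
      letI := Classical.decEq G
      ((Finset.Ico (min k 0) (max k 0)).image
        fun m => x ^ m * (h * (rest.map fun p => x ^ p.1 * p.2).prod)) ∪ coeffs x rest

lemma zpow_smul_eq {X : Type*} [MulAction G X] (x g : G) (q : X) (k : ℤ)
    (h : ∀ m ∈ Finset.Ico (min k 0) (max k 0), g • (x ^ m • q) = x ^ (m + 1) • q) :
    g ^ k • q = x ^ k • q := by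
  induction k using Int.induction_on with
  | zero => simp
  | succ i ih =>
      have ih' : g ^ (i : ℤ) • q = x ^ (i : ℤ) • q :=
        ih fun m hm => h m (by simp only [Finset.mem_Ico] at hm ⊢; omega)
      have h1 : g ^ ((i : ℤ) + 1) = g * g ^ (i : ℤ) := by
        rw [add_comm, zpow_add, zpow_one]
      rw [h1, mul_smul, ih']
      exact h i (by simp only [Finset.mem_Ico]; omega)
  | pred i ih =>
      have ih' : g ^ (-(i : ℤ)) • q = x ^ (-(i : ℤ)) • q :=
        ih fun m hm => h m (by simp only [Finset.mem_Ico] at hm ⊢; omega)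
      have h1 : g ^ (-(i : ℤ) - 1) = g⁻¹ * g ^ (-(i : ℤ)) := by
        rw [show (-(i : ℤ) - 1) = -1 + -(i : ℤ) by ring, zpow_add, zpow_neg_one]
      have key : g • (x ^ (-(i : ℤ) - 1) • q) = x ^ (-(i : ℤ)) • q := by
        have := h (-(i : ℤ) - 1) (by simp only [Finset.mem_Ico]; omega)
        rwa [show (-(i : ℤ) - 1 + 1) = -(i : ℤ) by ring] at this
      rw [h1, mul_smul, ih', ← key, inv_smul_smul]

lemma ptOf_eq {X : Type*} [MulAction G X] (x g : G) (p : X) :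
    ∀ l : List (ℤ × G), (∀ c ∈ coeffs x l, g • (c • p) = (x * c) • p) →
      (l.map fun pr => g ^ pr.1 * pr.2).prod • p = (l.map fun pr => x ^ pr.1 * pr.2).prod • p
  | [], _ => rfl
  | (k, h₀) :: rest, hc => by
      have hrest :
          (rest.map fun pr => g ^ pr.1 * pr.2).prod • p
            = (rest.map fun pr => x ^ pr.1 * pr.2).prod • p :=
        ptOf_eq x g p rest fun c hcc => hc c (by
          classical
          simp only [coeffs, Finset.mem_union]; exact Or.inr hcc)
      simp only [List.map_cons, List.prod_cons]
      rw [mul_assoc, mul_assoc, mul_smul, mul_smul, mul_smul, mul_smul, hrest]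
      set q : X := h₀ • ((rest.map fun pr => x ^ pr.1 * pr.2).prod • p) with hqdef
      exact zpow_smul_eq x g q k (by
        classical
        intro m hm
        have hmem : x ^ m * (h₀ * (rest.map fun pr => x ^ pr.1 * pr.2).prod)
            ∈ coeffs x ((k, h₀) :: rest) := by
          simp only [coeffs, Finset.mem_union]
          exact Or.inl (Finset.mem_image.2 ⟨m, hm, rfl⟩)
        have h2 : x ^ (m + 1) • q = x • (x ^ m • q) := by
          rw [show m + 1 = 1 + m by ring, zpow_add, zpow_one, mul_smul]
        rw [h2, hqdef]
        have := hc _ hmem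
        rw [mul_smul, mul_smul, ← mul_assoc, mul_smul, mul_smul, mul_smul] at this
        exact this)



def Good {X : Type*} (E : Finset (X × X)) : Prop :=
  ∀ pr ∈ E, ∀ pr' ∈ E, (pr.1 = pr'.1 ↔ pr.2 = pr'.2)

lemma exists_smul_ne {X : Type*} [MulAction G X] [FaithfulSMul G X] {a : G} (ha : a ≠ 1) :
    ∃ p : X, a • p ≠ p := by
  by_contra hcon
  push_neg at hcon
  exact ha (FaithfulSMul.eq_of_smul_eq_smul fun p => by rw [hcon p, one_smul])

lemma open_infinite {X : Type*} [TopologicalSpace X] [T2Space X]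
    (hperf : ∀ x : X, ¬ IsOpen ({x} : Set X)) {U : Set X} (hU : IsOpen U)
    (hne : U.Nonempty) : U.Infinite := by
  intro hfin
  obtain ⟨u, hu⟩ := hne
  have h1 : IsClosed (U \ {u}) := (hfin.subset Set.diff_subset).isClosed
  have h2 : ({u} : Set X) = U ∩ (U \ {u})ᶜ := by
    ext z
    simp only [Set.mem_singleton_iff, Set.mem_inter_iff, Set.mem_compl_iff, Set.mem_diff,
      Set.mem_singleton_iff, not_and, not_not]
    constructor
    · rintro rfl; exact ⟨hu, fun _ => rfl⟩
    · rintro ⟨hz, himp⟩; exact himp hz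
  exact hperf u (h2 ▸ hU.inter h1.isOpen_compl)

lemma aux_lemma {X : Type*} [TopologicalSpace X] [T2Space X]
    (hperf : ∀ x : X, ¬ IsOpen ({x} : Set X))
    [MulAction G X] [FaithfulSMul G X]
    (hcont : ∀ g : G, Continuous fun x : X => g • x) :
    ∀ L : List (G × List (ℤ × G)), (∀ w ∈ L, ∃ x : G, evalW w x ≠ 1) →
      ∀ E : Finset (X × X), Good E →
        ∃ E' : Finset (X × X), E ⊆ E' ∧ Good E' ∧
          ∀ w ∈ L, ∀ g : G, (∀ pr ∈ E', g • pr.1 = pr.2) → evalW w g ≠ 1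
  | [], _, E, hE => ⟨E, Finset.Subset.refl E, hE, by simp⟩
  | w :: rest, hL, E, hE => by
      classical
      obtain ⟨x, hx⟩ := hL w (by simp)
      -- a point moved by `evalW w x`
      have hne : {p : X | evalW w x • p ≠ p}.Nonempty := exists_smul_ne hx
      have hUopen : IsOpen {p : X | evalW w x • p ≠ p} := by
        have : IsClosed {p : X | evalW w x • p = p} :=
          isClosed_eq (hcont (evalW w x)) continuous_id
        exact this.isOpen_compl
      -- the finite set of points already used
      set F : Set X := (↑(E.image Prod.fst) : Set X) ∪ ↑(E.image Prod.snd) with hF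
      have hFfin : F.Finite := (Finset.finite_toSet _).union (Finset.finite_toSet _)
      -- bad points
      set B : Set X := {p : X | ∃ c ∈ coeffs x w.2, c • p ∈ F ∨ (x * c) • p ∈ F} with hB
      have hBfin : B.Finite := by
        have hsub : B ⊆ ⋃ c ∈ (↑(coeffs x w.2) : Set G),
            ((fun q => c⁻¹ • q) '' F ∪ (fun q => (x * c)⁻¹ • q) '' F) := by
          rintro p ⟨c, hc, hcp⟩
          refine Set.mem_biUnion hc ?_
          rcases hcp with h | h
          · exact Or.inl ⟨c • p, h, inv_smul_smul c p⟩
          · exact Or.inr ⟨(x * c) • p, h, inv_smul_smul (x * c) p⟩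
        exact Set.Finite.subset
          (Set.Finite.biUnion (Finset.finite_toSet _)
            fun c _ => (hFfin.image _).union (hFfin.image _)) hsub
      -- choose a good base point
      obtain ⟨p, hpU, hpB⟩ :=
        ((open_infinite hperf hUopen hne).diff hBfin).nonempty
      -- the new pairs
      set P : Finset (X × X) := (coeffs x w.2).image fun c => (c • p, (x * c) • p) with hP
      have hPF : ∀ pr ∈ P, pr.1 ∉ F ∧ pr.2 ∉ F := by
        intro pr hpr
        obtain ⟨c, hc, rfl⟩ := Finset.mem_image.1 hpr
        constructor
        · intro hmem; exact hpB ⟨c, hc, Or.inl hmem⟩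
        · intro hmem; exact hpB ⟨c, hc, Or.inr hmem⟩
      have hEF : ∀ pr ∈ E, pr.1 ∈ F ∧ pr.2 ∈ F := by
        intro pr hpr
        constructor
        · exact Or.inl (by simpa using Finset.mem_image_of_mem Prod.fst hpr)
        · exact Or.inr (by simpa using Finset.mem_image_of_mem Prod.snd hpr)
      have hGood : Good (E ∪ P) := by
        intro pr hpr pr' hpr'
        rcases Finset.mem_union.1 hpr with h1 | h1 <;> rcases Finset.mem_union.1 hpr' with h2 | h2
        · exact hE pr h1 pr' h2
        · obtain ⟨c', hc', rfl⟩ := Finset.mem_image.1 h2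
          constructor
          · intro h; exact absurd (h ▸ (hEF pr h1).1) (hPF _ h2).1
          · intro h; exact absurd (h ▸ (hEF pr h1).2) (hPF _ h2).2
        · obtain ⟨c, hc, rfl⟩ := Finset.mem_image.1 h1
          constructor
          · intro h; exact absurd (h ▸ (hEF pr' h2).1) (hPF _ h1).1
          · intro h; exact absurd (h ▸ (hEF pr' h2).2) (hPF _ h1).2
        · obtain ⟨c, hc, rfl⟩ := Finset.mem_image.1 h1
          obtain ⟨c', hc', rfl⟩ := Finset.mem_image.1 h2
          simp only
          constructor
          · intro h
            have : x • (c • p) = x • (c' • p) := by rw [h]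
            rwa [smul_smul, smul_smul] at this
          · intro h
            rw [mul_smul, mul_smul] at h
            exact smul_left_cancel x h
      obtain ⟨E', hsub, hGood', hrest⟩ := aux_lemma hperf hcont rest
        (fun v hv => hL v (List.mem_cons_of_mem _ hv)) (E ∪ P) hGood
      refine ⟨E', fun a ha => hsub (Finset.mem_union_left _ ha), hGood', ?_⟩
      intro v hv g hg
      rcases List.mem_cons.1 hv with rfl | hv'
      · -- the head word
        have hagree : ∀ c ∈ coeffs x v.2, g • (c • p) = (x * c) • p := by
          intro c hc
          exact hg _ (hsub (Finset.mem_union_right _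
            (Finset.mem_image.2 ⟨c, hc, rfl⟩)))
        have := ptOf_eq x g p v.2 hagree
        intro hone
        apply hpU
        have : evalW v g • p = evalW v x • p := by
          rw [evalW, evalW, mul_smul, mul_smul, this]
        rw [hone, one_smul] at this
        exact this.symm
      · exact hrest v hv' g hg


lemma exists_common {X : Type*} [TopologicalSpace X] [T2Space X]
    (hperf : ∀ x : X, ¬ IsOpen ({x} : Set X))
    [MulAction G X] [FaithfulSMul G X]
    (hcont : ∀ g : G, Continuous fun x : X => g • x)
    (htrans : ∀ (f : X → X) (s : Finset X), Set.InjOn f ↑s →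
      ∃ g : G, ∀ x ∈ s, g • x = f x)
    (L : List (G × List (ℤ × G))) (hL : ∀ w ∈ L, ∃ x : G, evalW w x ≠ 1) :
    ∃ g : G, ∀ w ∈ L, evalW w g ≠ 1 := by
  classical
  obtain ⟨E', -, hGood, hall⟩ := aux_lemma hperf hcont L hL ∅ (by intro pr h; simp at h)
  set s : Finset X := E'.image Prod.fst with hs
  set f : X → X := fun a => if h : ∃ b, (a, b) ∈ E' then h.choose else a with hf
  have hfval : ∀ pr ∈ E', f pr.1 = pr.2 := by
    intro pr hpr
    have hex : ∃ b, (pr.1, b) ∈ E' := ⟨pr.2, hpr⟩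
    have hch : (pr.1, hex.choose) ∈ E' := hex.choose_spec
    have : f pr.1 = hex.choose := by simp only [hf]; rw [dif_pos hex]
    rw [this]
    exact (hGood _ hch pr hpr).1 rfl
  have hinj : Set.InjOn f ↑s := by
    intro a ha a' ha' hfa
    obtain ⟨pr, hpr, hpr1⟩ := Finset.mem_image.1 (by exact_mod_cast ha)
    obtain ⟨pr', hpr', hpr1'⟩ := Finset.mem_image.1 (by exact_mod_cast ha')
    have e1 : f a = pr.2 := by rw [← hpr1]; exact hfval pr hpr
    have e2 : f a' = pr'.2 := by rw [← hpr1']; exact hfval pr' hpr'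
    have : pr.2 = pr'.2 := by rw [← e1, ← e2, hfa]
    have := (hGood pr hpr pr' hpr').2 this
    rw [← hpr1, ← hpr1', this]
  obtain ⟨g, hg⟩ := htrans f s hinj
  refine ⟨g, fun w hw => hall w hw g ?_⟩
  intro pr hpr
  have h1 : pr.1 ∈ s := Finset.mem_image_of_mem Prod.fst hpr
  rw [hg pr.1 h1, hfval pr hpr]

end ZariskiAux


lemma ZariskiAux.t2_of_topgroup {G : Type*} [Group G] [TopologicalSpace G]
    [IsTopologicalGroup G] (h : ∀ g : G, IsClosed ({g} : Set G)) : T2Space G :=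
  IsTopologicalGroup.t2Space_iff_one_closed.2 (h 1)

open ZariskiAux in
/-- If a group acts faithfully and highly transitively by homeomorphisms on a
Hausdorff space without isolated points, then its group Zariski topology is
irreducible; in particular (the group being nontrivial) it is neither Hausdorff
nor a group topology. -/
theorem zariski_irreducible_of_highly_transitive_action
    {X : Type*} [TopologicalSpace X] [T2Space X]
    (hperf : ∀ x : X, ¬ IsOpen ({x} : Set X))
    (G : Type*) [Group G] [MulAction G X] [FaithfulSMul G X]
    (hcont : ∀ g : G, Continuous fun x : X => g • x)
    (htrans : ∀ (f : X → X) (s : Finset X), Set.InjOn f ↑s →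
      ∃ g : G, ∀ x ∈ s, g • x = f x) :
    (∀ U V : Set G, (zariskiTopology G).IsOpen U → (zariskiTopology G).IsOpen V →
        U.Nonempty → V.Nonempty → (U ∩ V).Nonempty) ∧
    (Nontrivial G → ¬ @T2Space G (zariskiTopology G) ∧
        ¬ @IsTopologicalGroup G (zariskiTopology G) _) := by

  classical
  letI : TopologicalSpace G := zariskiTopology G
  set SB : Set (Set G) := {S : Set G | ∃ (g₀ : G) (w : List (ℤ × G)),
      S = {x : G | g₀ * (w.map fun p => x ^ p.1 * p.2).prod ≠ 1}} with hSB
  have hgen : (zariskiTopology G) = TopologicalSpace.generateFrom SB := rfl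
  have hbasis := TopologicalSpace.isTopologicalBasis_of_subbasis (t := zariskiTopology G) hgen
  -- word extraction
  set wd : Set G → G × List (ℤ × G) := fun S =>
    if h : ∃ (g₀ : G) (w : List (ℤ × G)),
        S = {x : G | g₀ * (w.map fun p => x ^ p.1 * p.2).prod ≠ 1} then
      (h.choose, h.choose_spec.choose)
    else (1, []) with hwd
  have hwdspec : ∀ S ∈ SB, S = {x : G | evalW (wd S) x ≠ 1} := by
    intro S hS
    obtain ⟨g₀, w, hSw⟩ := hS
    have hEx : ∃ (g₀ : G) (w : List (ℤ × G)),
        S = {x : G | g₀ * (w.map fun p => x ^ p.1 * p.2).prod ≠ 1} := ⟨g₀, w, hSw⟩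
    have h1 : wd S = (hEx.choose, hEx.choose_spec.choose) := by
      simp only [hwd]; rw [dif_pos hEx]
    rw [h1]
    exact hEx.choose_spec.choose_spec
  have main : ∀ U V : Set G, (zariskiTopology G).IsOpen U → (zariskiTopology G).IsOpen V →
      U.Nonempty → V.Nonempty → (U ∩ V).Nonempty := by
    intro U V hU hV ⟨u, huU⟩ ⟨v, hvV⟩
    obtain ⟨Bu, hBu, huBu, hBuU⟩ := hbasis.exists_subset_of_mem_open huU hU
    obtain ⟨Bv, hBv, hvBv, hBvV⟩ := hbasis.exists_subset_of_mem_open hvV hV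
    obtain ⟨t, ⟨htfin, htsub⟩, rfl⟩ := hBu
    obtain ⟨t', ⟨ht'fin, ht'sub⟩, rfl⟩ := hBv
    set L : List (G × List (ℤ × G)) :=
      (htfin.toFinset.toList ++ ht'fin.toFinset.toList).map wd with hL
    have hLw : ∀ w ∈ L, ∃ x : G, evalW w x ≠ 1 := by
      intro w hw
      obtain ⟨S, hSmem, rfl⟩ := List.mem_map.1 hw
      rcases List.mem_append.1 hSmem with hS | hS
      · have hSt : S ∈ t := htfin.mem_toFinset.1 (Finset.mem_toList.1 hS)
        have huS : u ∈ S := huBu S hSt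
        exact ⟨u, by have := hwdspec S (htsub hSt) ▸ huS; exact this⟩
      · have hSt : S ∈ t' := ht'fin.mem_toFinset.1 (Finset.mem_toList.1 hS)
        have hvS : v ∈ S := hvBv S hSt
        exact ⟨v, by have := hwdspec S (ht'sub hSt) ▸ hvS; exact this⟩
    obtain ⟨g, hg⟩ := exists_common hperf hcont htrans L hLw
    have hgt : ∀ S ∈ t, g ∈ S := by
      intro S hSt
      rw [hwdspec S (htsub hSt)]
      exact hg (wd S) (List.mem_map.2 ⟨S, List.mem_append.2 (Or.inl
        (Finset.mem_toList.2 (htfin.mem_toFinset.2 hSt))), rfl⟩)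
    have hgt' : ∀ S ∈ t', g ∈ S := by
      intro S hSt
      rw [hwdspec S (ht'sub hSt)]
      exact hg (wd S) (List.mem_map.2 ⟨S, List.mem_append.2 (Or.inr
        (Finset.mem_toList.2 (ht'fin.mem_toFinset.2 hSt))), rfl⟩)
    exact ⟨g, hBuU fun S hS => hgt S hS, hBvV fun S hS => hgt' S hS⟩
  refine ⟨main, fun hnt => ?_⟩
  have hnotT2 : ¬ @T2Space G (zariskiTopology G) := by
    intro hT2
    obtain ⟨a, b, hab⟩ := hnt
    obtain ⟨u, v, hu, hv, hau, hbv, huv⟩ := @t2_separation G (zariskiTopology G) hT2 a b hab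
    obtain ⟨z, hz1, hz2⟩ := main u v hu hv ⟨a, hau⟩ ⟨b, hbv⟩
    exact Set.disjoint_left.1 huv hz1 hz2
  refine ⟨hnotT2, fun hTG => hnotT2 ?_⟩
  have hT1 : ∀ g : G, @IsClosed G (zariskiTopology G) ({g} : Set G) := by
    intro g
    have hSmem : {x : G | (1 : G) * ((([((1 : ℤ), g⁻¹)] : List (ℤ × G)).map
        fun p => x ^ p.1 * p.2).prod) ≠ 1} ∈ SB := ⟨1, [((1 : ℤ), g⁻¹)], rfl⟩
    have hopen : (zariskiTopology G).IsOpen {x : G | (1 : G) * ((([((1 : ℤ), g⁻¹)] :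
        List (ℤ × G)).map fun p => x ^ p.1 * p.2).prod) ≠ 1} :=
      TopologicalSpace.isOpen_generateFrom_of_mem hSmem
    have heq : {x : G | (1 : G) * ((([((1 : ℤ), g⁻¹)] : List (ℤ × G)).map
        fun p => x ^ p.1 * p.2).prod) ≠ 1} = ({g} : Set G)ᶜ := by
      ext x
      simp [mul_inv_eq_one]
    exact ⟨heq ▸ hopen⟩
  exact @ZariskiAux.t2_of_topgroup G _ (zariskiTopology G) hTG hT1
end
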